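/- arXiv:1706.10034 — 2 statements merged into one kernel-verified Lean document; each statement's English description precedes it below -/
import Mathlib

section
/- Let N ≥ 1 and let u₀ ∈ L¹(ℝ^N) have finite first absolute moment 𝒩₁ = ∫_{ℝ^N} |y| |u₀(y)| dy < ∞. Let M = ∫_{ℝ^N} u₀(x) dx and u(x,t) = ∫_{ℝ^N} G_t(x−y) u₀(y) dy. Then there is a constant C > 0 depending only on N such that for all t > 0, ‖u(·,t) − M·G_t‖_{L¹(ℝ^N)} ≤ C·𝒩₁·t^{−1/2}. -/
open MeasureTheory Real Filter

set_option maxHeartbeats 1000000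
set_option synthInstance.maxHeartbeats 400000

/-- The Gaussian heat kernel on `ℝ^N`: `G_t(x) = (4πt)^{-N/2} exp(-|x|²/(4t))`. -/
noncomputable def heatKernel (N : ℕ) (t : ℝ) (x : EuclideanSpace ℝ (Fin N)) : ℝ :=
  (4 * π * t) ^ (-(N : ℝ) / 2) * exp (-‖x‖ ^ 2 / (4 * t))

/-- The solution of the heat equation with initial data `u₀`, given by convolution
with the heat kernel: `u(x,t) = ∫ G_t(x-y) u₀(y) dy`. -/
noncomputable def heatSol (N : ℕ) (u₀ : EuclideanSpace ℝ (Fin N) → ℝ)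
    (x : EuclideanSpace ℝ (Fin N)) (t : ℝ) : ℝ :=
  ∫ y, heatKernel N t (x - y) * u₀ y

namespace HeatAux

/-- Gaussian integrability on Euclidean space. -/
lemma integrable_rexp_neg_mul_sq_norm (N : ℕ) {b : ℝ} (hb : 0 < b) :
    Integrable fun z : EuclideanSpace ℝ (Fin N) => rexp (-b * ‖z‖ ^ 2) := by
  have h : Integrable fun v : EuclideanSpace ℝ (Fin N) =>
      Complex.exp (-(b:ℂ) * ‖v‖ ^ 2 + 0 * (inner ℝ (0 : EuclideanSpace ℝ (Fin N)) v : ℝ)) :=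
    GaussianFourier.integrable_cexp_neg_mul_sq_norm_add (by simpa using hb) 0 0
  refine h.norm.congr (Eventually.of_forall fun z => ?_)
  simp only [zero_mul, add_zero, Complex.norm_exp]
  congr 1
  rw [← Complex.ofReal_pow, ← Complex.ofReal_neg, ← Complex.ofReal_mul, Complex.ofReal_re]

/-- The normalized Gaussian `g(z) = (4π)^{-N/2} e^{-‖z‖²/4}`. -/
noncomputable def gK (N : ℕ) (z : EuclideanSpace ℝ (Fin N)) : ℝ :=
  (4 * π) ^ (-(N : ℝ) / 2) * rexp (-‖z‖ ^ 2 / 4)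

lemma gK_nonneg (N : ℕ) (z : EuclideanSpace ℝ (Fin N)) : 0 ≤ gK N z := by
  unfold gK; positivity

lemma integrable_gK (N : ℕ) : Integrable (gK N) := by
  have h := (integrable_rexp_neg_mul_sq_norm N (b := (4:ℝ)⁻¹) (by norm_num)).const_mul
    ((4 * π) ^ (-(N : ℝ) / 2))
  have he : (fun z : EuclideanSpace ℝ (Fin N) =>
      (4 * π) ^ (-(N : ℝ) / 2) * rexp (-(4:ℝ)⁻¹ * ‖z‖ ^ 2)) = gK N := by
    funext z; unfold gK; congr 1; ring
  rwa [he] at h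

lemma hasFDerivAt_gK (N : ℕ) (z : EuclideanSpace ℝ (Fin N)) :
    HasFDerivAt (gK N) ((gK N z * (-2⁻¹ : ℝ)) • innerSL ℝ z) z := by
  have h1 : HasFDerivAt (fun z : EuclideanSpace ℝ (Fin N) => ‖z‖ ^ 2)
      (2 • innerSL ℝ z) z := (hasStrictFDerivAt_norm_sq z).hasFDerivAt
  have h2 := ((h1.const_mul (-(4:ℝ)⁻¹)).exp).const_mul ((4 * π) ^ (-(N : ℝ) / 2))
  have hfun : (fun z : EuclideanSpace ℝ (Fin N) =>
      (4 * π) ^ (-(N : ℝ) / 2) * rexp (-(4:ℝ)⁻¹ * ‖z‖ ^ 2)) = gK N := by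
    funext w; unfold gK; congr 1; ring_nf
  rw [hfun] at h2
  have hd : (gK N z * (-2⁻¹ : ℝ)) • innerSL ℝ z = (4 * π) ^ (-(N:ℝ) / 2) •
      rexp (-4⁻¹ * ‖z‖ ^ 2) • (-4⁻¹ : ℝ) • (2 • innerSL ℝ z) := by
    ext v
    simp only [ContinuousLinearMap.coe_smul', Pi.smul_apply, smul_eq_mul, gK,
      ContinuousLinearMap.smul_apply, ContinuousLinearMap.coe_smul]
    ring_nf
  rw [hd]; exact h2

lemma norm_gK_deriv (N : ℕ) (z : EuclideanSpace ℝ (Fin N)) :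
    ‖(gK N z * (-2⁻¹ : ℝ)) • innerSL ℝ z‖ = gK N z * 2⁻¹ * ‖z‖ := by
  rw [norm_smul (gK N z * (-2⁻¹ : ℝ)) (innerSL ℝ z), innerSL_apply_norm,
    Real.norm_eq_abs, abs_mul, abs_of_nonneg (gK_nonneg N z)]
  norm_num

/-- The dominating function for the gradient bound. -/
noncomputable def Phi (N : ℕ) (z : EuclideanSpace ℝ (Fin N)) : ℝ :=
  (4 * (4 * π) ^ (-(N : ℝ) / 2) * rexp 1) * rexp (-‖z‖ ^ 2 / 32)

lemma Phi_nonneg (N : ℕ) (z : EuclideanSpace ℝ (Fin N)) : 0 ≤ Phi N z := by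
  unfold Phi; positivity

lemma integrable_Phi (N : ℕ) : Integrable (Phi N) := by
  have h := (integrable_rexp_neg_mul_sq_norm N (b := (32:ℝ)⁻¹) (by norm_num)).const_mul
    (4 * (4 * π) ^ (-(N : ℝ) / 2) * rexp 1)
  have he : (fun z : EuclideanSpace ℝ (Fin N) =>
      (4 * (4 * π) ^ (-(N : ℝ) / 2) * rexp 1) * rexp (-(32:ℝ)⁻¹ * ‖z‖ ^ 2)) = Phi N := by
    funext z; unfold Phi; congr 1; ring
  rwa [he] at h

lemma scalar1 (r : ℝ) (hr : 0 ≤ r) : r * rexp (-r ^ 2 / 4) ≤ 8 * rexp (-r ^ 2 / 8) := by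
  have key : r * rexp (-r ^ 2 / 8) ≤ 8 := by
    rw [neg_div, Real.exp_neg, mul_inv_le_iff₀' (exp_pos _)]
    nlinarith [Real.add_one_le_exp (r ^ 2 / 8)]
  have : rexp (-r ^ 2 / 4) = rexp (-r ^ 2 / 8) * rexp (-r ^ 2 / 8) := by
    rw [← Real.exp_add]; ring_nf
  rw [this, ← mul_assoc]
  exact mul_le_mul_of_nonneg_right key (exp_pos _).le

lemma scalar2 {a b : ℝ} (ha : 0 ≤ a) (hb : 0 ≤ b) (hab : b - 1 ≤ a) :
    rexp (-a ^ 2 / 8) ≤ rexp 1 * rexp (-b ^ 2 / 32) := by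
  rw [← Real.exp_add]
  apply Real.exp_le_exp.2
  rcases le_total b 2 with h | h
  · nlinarith
  · nlinarith [sq_nonneg (a - b + 1)]

lemma deriv_bound (N : ℕ) {z u : EuclideanSpace ℝ (Fin N)} (hu : ‖z‖ - 1 ≤ ‖u‖) :
    ‖(gK N u * (-2⁻¹ : ℝ)) • innerSL ℝ u‖ ≤ Phi N z := by
  rw [norm_gK_deriv]
  unfold gK Phi
  have h1 := scalar1 ‖u‖ (norm_nonneg u)
  have h2 := scalar2 (norm_nonneg u) (norm_nonneg z) hu
  have hc : (0:ℝ) < (4 * π) ^ (-(N : ℝ) / 2) := by positivity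
  calc (4 * π) ^ (-(N : ℝ) / 2) * rexp (-‖u‖ ^ 2 / 4) * 2⁻¹ * ‖u‖
      = ((4 * π) ^ (-(N : ℝ) / 2) * 2⁻¹) * (‖u‖ * rexp (-‖u‖ ^ 2 / 4)) := by ring
    _ ≤ ((4 * π) ^ (-(N : ℝ) / 2) * 2⁻¹) * (8 * rexp (-‖u‖ ^ 2 / 8)) := by
        apply mul_le_mul_of_nonneg_left h1 (by positivity)
    _ ≤ ((4 * π) ^ (-(N : ℝ) / 2) * 2⁻¹) * (8 * (rexp 1 * rexp (-‖z‖ ^ 2 / 32))) := by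
        apply mul_le_mul_of_nonneg_left (by nlinarith [exp_pos (-‖z‖^2/32)]) (by positivity)
    _ = 4 * (4 * π) ^ (-(N : ℝ) / 2) * rexp 1 * rexp (-‖z‖ ^ 2 / 32) := by ring

/-- pointwise mean-value bound for small shifts -/
lemma gK_sub_le (N : ℕ) (z h : EuclideanSpace ℝ (Fin N)) (hh : ‖h‖ ≤ 1) :
    |gK N (z - h) - gK N z| ≤ Phi N z * ‖h‖ := by
  have hsub : segment ℝ (z - h) z ⊆ Metric.closedBall z ‖h‖ := by
    apply (convex_closedBall z ‖h‖).segment_subset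
    · simp [Metric.mem_closedBall, dist_eq_norm]
    · simp [Metric.mem_closedBall]
  have key := (convex_segment (z - h) z).norm_image_sub_le_of_norm_hasFDerivWithin_le
    (f := gK N) (f' := fun u => (gK N u * (-2⁻¹ : ℝ)) • innerSL ℝ u) (C := Phi N z)
    (fun u _ => (hasFDerivAt_gK N u).hasFDerivWithinAt)
    (fun u hu => by
      apply deriv_bound
      have := hsub hu
      rw [Metric.mem_closedBall, dist_eq_norm] at this
      have h2 : ‖z‖ - ‖u‖ ≤ ‖z - u‖ := by
        simpa using norm_sub_norm_le z u
      linarith [le_trans this hh, (by rw [norm_sub_rev]: ‖z - u‖ = ‖u - z‖)])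
    (right_mem_segment ℝ (z - h) z) (left_mem_segment ℝ (z - h) z)
  simpa [Real.norm_eq_abs, sub_sub_cancel] using key

/-- L¹ Lipschitz bound for translations of the Gaussian -/
lemma translate_L1 (N : ℕ) :
    ∃ C₀ : ℝ, 0 < C₀ ∧ ∀ h : EuclideanSpace ℝ (Fin N),
      ∫ z, |gK N (z - h) - gK N z| ≤ C₀ * ‖h‖ := by
  set Ig := ∫ z, gK N z with hIg
  set IΦ := ∫ z, Phi N z with hIΦ
  have hIg0 : 0 ≤ Ig := integral_nonneg (gK_nonneg N)
  have hIΦ0 : 0 ≤ IΦ := integral_nonneg (Phi_nonneg N)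
  refine ⟨2 * Ig + IΦ + 1, by positivity, fun h => ?_⟩
  rcases le_total ‖h‖ 1 with hh | hh
  · calc ∫ z, |gK N (z - h) - gK N z|
        ≤ ∫ z, Phi N z * ‖h‖ := by
          refine integral_mono_of_nonneg (Eventually.of_forall fun z => abs_nonneg _)
            ((integrable_Phi N).mul_const _)
            (Eventually.of_forall fun z => gK_sub_le N z h hh)
      _ = IΦ * ‖h‖ := by rw [integral_mul_const]
      _ ≤ (2 * Ig + IΦ + 1) * ‖h‖ := by
          apply mul_le_mul_of_nonneg_right _ (norm_nonneg h); linarith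
  · calc ∫ z, |gK N (z - h) - gK N z|
        ≤ ∫ z, (gK N (z - h) + gK N z) := by
          refine integral_mono_of_nonneg (Eventually.of_forall fun z => abs_nonneg _)
            (((integrable_gK N).comp_sub_right h).add (integrable_gK N))
            (Eventually.of_forall fun z => ?_)
          calc |gK N (z - h) - gK N z| ≤ |gK N (z - h)| + |gK N z| := abs_sub _ _
            _ = gK N (z - h) + gK N z := by
                rw [abs_of_nonneg (gK_nonneg N _), abs_of_nonneg (gK_nonneg N _)]
      _ = 2 * Ig := by
          rw [integral_add ((integrable_gK N).comp_sub_right h) (integrable_gK N),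
            integral_sub_right_eq_self (gK N) h]
          ring
      _ ≤ (2 * Ig + IΦ + 1) * 1 := by linarith
      _ ≤ (2 * Ig + IΦ + 1) * ‖h‖ := by
          apply mul_le_mul_of_nonneg_left hh (by linarith)


lemma heatKernel_eq (N : ℕ) {t : ℝ} (ht : 0 < t) (x : EuclideanSpace ℝ (Fin N)) :
    heatKernel N t x = t ^ (-(N : ℝ) / 2) * gK N ((Real.sqrt t)⁻¹ • x) := by
  have h1 : ‖(Real.sqrt t)⁻¹ • x‖ ^ 2 = t⁻¹ * ‖x‖ ^ 2 := by
    rw [norm_smul, Real.norm_eq_abs, abs_inv, abs_of_nonneg (Real.sqrt_nonneg t),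
      mul_pow, inv_pow, Real.sq_sqrt ht.le]
  unfold heatKernel gK
  rw [h1, Real.mul_rpow (by positivity) ht.le]
  have ht' : t ≠ 0 := ht.ne'
  rw [show -(t⁻¹ * ‖x‖ ^ 2) / 4 = -‖x‖ ^ 2 / (4 * t) by field_simp]
  ring

lemma kernel_L1 (N : ℕ) {C₀ : ℝ} (hC₀ : 0 ≤ C₀)
    (hA : ∀ h : EuclideanSpace ℝ (Fin N), ∫ z, |gK N (z - h) - gK N z| ≤ C₀ * ‖h‖)
    {t : ℝ} (ht : 0 < t) (y : EuclideanSpace ℝ (Fin N)) :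
    ∫ x, |heatKernel N t (x - y) - heatKernel N t x| ≤ C₀ * ‖y‖ * t ^ (-(1 : ℝ) / 2) := by
  set s := Real.sqrt t with hs_def
  have hs : 0 < s := Real.sqrt_pos.2 ht
  have htN : (0 : ℝ) < t ^ (-(N : ℝ) / 2) := rpow_pos_of_pos ht _
  have hsInv : s⁻¹ = t ^ (-(1 : ℝ) / 2) := by
    rw [show -(1 : ℝ) / 2 = -(1 / 2) by norm_num, Real.rpow_neg ht.le,
      hs_def, Real.sqrt_eq_rpow]
  have hsN : s ^ N = t ^ ((N : ℝ) / 2) := by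
    rw [hs_def, Real.sqrt_eq_rpow, ← Real.rpow_natCast (t ^ ((1:ℝ)/2)) N,
      ← Real.rpow_mul ht.le]
    congr 1
    ring
  have hfun : ∀ x : EuclideanSpace ℝ (Fin N), |heatKernel N t (x - y) - heatKernel N t x|
      = t ^ (-(N : ℝ) / 2) *
        (fun z => |gK N (z - s⁻¹ • y) - gK N z|) (s⁻¹ • x) := by
    intro x
    simp only
    rw [heatKernel_eq N ht, heatKernel_eq N ht, smul_sub, ← mul_sub, abs_mul,
      abs_of_pos htN]
  calc ∫ x, |heatKernel N t (x - y) - heatKernel N t x|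
      = t ^ (-(N : ℝ) / 2) *
        ∫ x, (fun z => |gK N (z - s⁻¹ • y) - gK N z|) (s⁻¹ • x) := by
        simp_rw [hfun]; rw [integral_const_mul]
    _ = t ^ (-(N : ℝ) / 2) * (|((s⁻¹ ^ Module.finrank ℝ (EuclideanSpace ℝ (Fin N)))⁻¹ : ℝ)| •
          ∫ z, |gK N (z - s⁻¹ • y) - gK N z|) := by
        congr 1
        exact MeasureTheory.Measure.integral_comp_smul volume
          (fun z => |gK N (z - s⁻¹ • y) - gK N z|) s⁻¹
    _ = t ^ (-(N : ℝ) / 2) * (t ^ ((N : ℝ) / 2) *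
          ∫ z, |gK N (z - s⁻¹ • y) - gK N z|) := by
        have habs : |((s⁻¹ ^ Module.finrank ℝ (EuclideanSpace ℝ (Fin N)))⁻¹ : ℝ)|
            = t ^ ((N : ℝ) / 2) := by
          rw [finrank_euclideanSpace_fin, inv_pow, inv_inv, hsN,
            abs_of_pos (rpow_pos_of_pos ht _)]
        rw [habs, smul_eq_mul]
    _ ≤ t ^ (-(N : ℝ) / 2) * (t ^ ((N : ℝ) / 2) * (C₀ * ‖s⁻¹ • y‖)) := by
        have := hA (s⁻¹ • y)
        have h2 := mul_le_mul_of_nonneg_left this (rpow_pos_of_pos ht ((N : ℝ) / 2)).le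
        exact mul_le_mul_of_nonneg_left h2 htN.le
    _ = C₀ * ‖y‖ * t ^ (-(1 : ℝ) / 2) := by
        rw [norm_smul, Real.norm_eq_abs, abs_inv, abs_of_pos hs, hsInv,
          ← mul_assoc, ← Real.rpow_add ht,
          show -(N : ℝ) / 2 + (N : ℝ) / 2 = 0 by ring, Real.rpow_zero]
        ring


lemma integrable_heatKernel (N : ℕ) {t : ℝ} (ht : 0 < t) :
    Integrable (heatKernel N t) := by
  have h := (integrable_rexp_neg_mul_sq_norm N (b := ((4*t):ℝ)⁻¹) (by positivity)).const_mul
    ((4 * π * t) ^ (-(N : ℝ) / 2))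
  have he : (fun x : EuclideanSpace ℝ (Fin N) =>
      (4 * π * t) ^ (-(N : ℝ) / 2) * rexp (-((4*t):ℝ)⁻¹ * ‖x‖ ^ 2)) = heatKernel N t := by
    funext x; unfold heatKernel; congr 1
    rw [neg_mul, inv_mul_eq_div, neg_div]
  rwa [he] at h

lemma continuous_heatKernel (N : ℕ) (t : ℝ) : Continuous (heatKernel N t) := by
  unfold heatKernel
  fun_prop

lemma heatKernel_bound (N : ℕ) {t : ℝ} (ht : 0 < t) (x : EuclideanSpace ℝ (Fin N)) :
    ‖heatKernel N t x‖ ≤ (4 * π * t) ^ (-(N : ℝ) / 2) := by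
  have h1 : (0:ℝ) < (4 * π * t) ^ (-(N : ℝ) / 2) := by positivity
  rw [Real.norm_eq_abs, heatKernel, abs_mul, abs_of_pos h1, abs_of_pos (exp_pos _)]
  have : rexp (-‖x‖ ^ 2 / (4 * t)) ≤ 1 := by
    rw [Real.exp_le_one_iff]
    have : (0:ℝ) ≤ ‖x‖ ^ 2 / (4 * t) := by positivity
    rw [neg_div]
    linarith
  nlinarith

end HeatAux

/-- Quantitative `L¹` convergence for data with finite first absolute moment:
`‖u(·,t) − M·G_t‖_{L¹} ≤ C·𝒩₁·t^{-1/2}` with `C = C(N)`. -/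
theorem heat_convergence_rate_first_moment_L1 (N : ℕ) (hN : 1 ≤ N) :
    ∃ C : ℝ, 0 < C ∧ ∀ u₀ : EuclideanSpace ℝ (Fin N) → ℝ,
      Integrable u₀ →
      Integrable (fun y => ‖y‖ * |u₀ y|) →
      ∀ t : ℝ, 0 < t →
        (∫ x, |heatSol N u₀ x t - (∫ y, u₀ y) * heatKernel N t x|) ≤
          C * (∫ y, ‖y‖ * |u₀ y|) * t ^ (-(1 : ℝ) / 2) := by
  obtain ⟨C₀, hC₀, hA⟩ := HeatAux.translate_L1 N
  refine ⟨C₀, hC₀, fun u₀ hu hmom t ht => ?_⟩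
  have hker := fun y => HeatAux.kernel_L1 N hC₀.le hA ht y
  have hGint : Integrable (heatKernel N t) := HeatAux.integrable_heatKernel N ht
  have hGcont : Continuous (heatKernel N t) := HeatAux.continuous_heatKernel N t
  have hconv : ∀ x : EuclideanSpace ℝ (Fin N),
      Integrable (fun y => heatKernel N t (x - y) * u₀ y) := by
    intro x
    refine hu.bdd_mul ((hGcont.comp (continuous_const.sub continuous_id)).aestronglyMeasurable)
      (Eventually.of_forall fun y => HeatAux.heatKernel_bound N ht (x - y))
  have hpt : ∀ x : EuclideanSpace ℝ (Fin N),
      heatSol N u₀ x t - (∫ y, u₀ y) * heatKernel N t x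
        = ∫ y, (heatKernel N t (x - y) - heatKernel N t x) * u₀ y := by
    intro x
    have h2 : Integrable (fun y => heatKernel N t x * u₀ y) := hu.const_mul _
    rw [show (∫ y, u₀ y) * heatKernel N t x = ∫ y, heatKernel N t x * u₀ y by
      rw [integral_const_mul]; ring]
    rw [heatSol, ← integral_sub (hconv x) h2]
    congr 1; funext y; ring
  have hF : Integrable (fun p : EuclideanSpace ℝ (Fin N) × EuclideanSpace ℝ (Fin N) =>
      (heatKernel N t (p.1 - p.2) - heatKernel N t p.1) * u₀ p.2) (volume.prod volume) := by
    have h1 : Integrable (fun p : EuclideanSpace ℝ (Fin N) × EuclideanSpace ℝ (Fin N) =>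
        (ContinuousLinearMap.mul ℝ ℝ) (u₀ p.2) (heatKernel N t (p.1 - p.2)))
        (volume.prod volume) :=
      hu.convolution_integrand (ContinuousLinearMap.mul ℝ ℝ) hGint
    have h2 : Integrable (fun p : EuclideanSpace ℝ (Fin N) × EuclideanSpace ℝ (Fin N) =>
        heatKernel N t p.1 * u₀ p.2) (volume.prod volume) := hGint.mul_prod hu
    exact (h1.sub h2).congr (Eventually.of_forall fun p => by
      simp only [Pi.sub_apply, ContinuousLinearMap.mul_apply']
      ring)
  calc ∫ x, |heatSol N u₀ x t - (∫ y, u₀ y) * heatKernel N t x|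
      = ∫ x, |∫ y, (heatKernel N t (x - y) - heatKernel N t x) * u₀ y| := by simp_rw [hpt]
    _ ≤ ∫ x, ∫ y, |(heatKernel N t (x - y) - heatKernel N t x) * u₀ y| := by
        refine integral_mono_of_nonneg (Eventually.of_forall fun x => abs_nonneg _)
          hF.integral_norm_prod_left (Eventually.of_forall fun x => ?_)
        exact norm_integral_le_integral_norm (μ := volume)
          (fun y => (heatKernel N t (x - y) - heatKernel N t x) * u₀ y)
    _ = ∫ y, ∫ x, |(heatKernel N t (x - y) - heatKernel N t x) * u₀ y| :=
        integral_integral_swap hF.norm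
    _ ≤ ∫ y, C₀ * ‖y‖ * t ^ (-(1 : ℝ) / 2) * |u₀ y| := by
        refine integral_mono_of_nonneg
          (Eventually.of_forall fun y => integral_nonneg fun x => abs_nonneg _)
          ((hmom.const_mul (C₀ * t ^ (-(1 : ℝ) / 2))).congr
            (Eventually.of_forall fun y => by ring))
          (Eventually.of_forall fun y => ?_)
        have he : (fun x => |(heatKernel N t (x - y) - heatKernel N t x) * u₀ y|)
            = fun x => |heatKernel N t (x - y) - heatKernel N t x| * |u₀ y| :=
          funext fun x => abs_mul _ _
        dsimp only
        rw [he, integral_mul_const]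
        exact mul_le_mul_of_nonneg_right (hker y) (abs_nonneg _)
    _ = C₀ * (∫ y, ‖y‖ * |u₀ y|) * t ^ (-(1 : ℝ) / 2) := by
        have he : (fun y : EuclideanSpace ℝ (Fin N) =>
            C₀ * ‖y‖ * t ^ (-(1 : ℝ) / 2) * |u₀ y|)
            = fun y => (C₀ * t ^ (-(1 : ℝ) / 2)) * (‖y‖ * |u₀ y|) := funext fun y => by ring
        rw [he, integral_const_mul]
        ring
end

section
/- No uniform convergence rate holds for general integrable data: let N ≥ 1 and let φ : (0,∞) → (0,∞) be any nonincreasing function with φ(t) → 0 as t → ∞. Then there exist u₀ ∈ L¹(ℝ^N) with u₀ ≥ 0 and ∫_{ℝ^N} u₀(x) dx = 1, and a sequence t_n → ∞, such that for every n ≥ 1 the solution u(x,t) = ∫_{ℝ^N} G_t(x−y) u₀(y) dy satisfies t_n^{N/2} ‖u(·,t_n) − G_{t_n}‖_{L^∞(ℝ^N)} ≥ n·φ(t_n). -/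
open MeasureTheory Real Filter Metric

lemma heatKernel_pos (N : ℕ) {t : ℝ} (ht : 0 < t) (x : EuclideanSpace ℝ (Fin N)) :
    0 < heatKernel N t x := by
  unfold heatKernel
  have hπ := pi_pos
  positivity

lemma heatKernel_le (N : ℕ) {t : ℝ} (ht : 0 < t) (x : EuclideanSpace ℝ (Fin N)) :
    heatKernel N t x ≤ (4 * π * t) ^ (-(N : ℝ) / 2) := by
  unfold heatKernel
  have hπ := pi_pos
  have h1 : exp (-‖x‖ ^ 2 / (4 * t)) ≤ 1 := by
    rw [exp_le_one_iff]
    apply div_nonpos_of_nonpos_of_nonneg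
    · simp [sq_nonneg]
    · positivity
  have h2 : (0:ℝ) < (4 * π * t) ^ (-(N : ℝ) / 2) := by positivity
  nlinarith

lemma heatKernel_cont (N : ℕ) (t : ℝ) : Continuous (heatKernel N t) := by
  unfold heatKernel
  fun_prop

lemma heatKernel_lb (N : ℕ) {t : ℝ} (ht : 1 ≤ t) {z : EuclideanSpace ℝ (Fin N)}
    (hz : ‖z‖ ≤ 1) : (4 * π * t) ^ (-(N : ℝ) / 2) * exp (-1) ≤ heatKernel N t z := by
  unfold heatKernel
  have hπ := pi_pos
  have h2 : (0:ℝ) < (4 * π * t) ^ (-(N : ℝ) / 2) := by positivity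
  have h1 : exp (-1 : ℝ) ≤ exp (-‖z‖ ^ 2 / (4 * t)) := by
    apply exp_le_exp.2
    rw [neg_div, neg_le_neg_iff, div_le_one (by linarith)]
    nlinarith [norm_nonneg z]
  nlinarith

lemma integrand_integrable (N : ℕ) {t : ℝ} (ht : 0 < t) {u₀ : EuclideanSpace ℝ (Fin N) → ℝ}
    (hu : Integrable u₀) (x : EuclideanSpace ℝ (Fin N)) :
    Integrable (fun y => heatKernel N t (x - y) * u₀ y) := by
  apply hu.bdd_mul (c := (4 * π * t) ^ (-(N : ℝ) / 2))
  · exact ((heatKernel_cont N t).comp (continuous_const.sub continuous_id)).aestronglyMeasurable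
  · refine Filter.Eventually.of_forall (fun y => ?_)
    rw [Real.norm_eq_abs, abs_of_pos (heatKernel_pos N ht _)]
    exact heatKernel_le N ht _

/-- No uniform convergence rate for general integrable data: for any nonincreasing
rate function `φ` tending to `0`, there exist nonnegative unit-mass data and times
`t_n → ∞` along which the renormalized error exceeds `n·φ(t_n)`. -/
theorem heat_no_uniform_rate (N : ℕ) (hN : 1 ≤ N)
    (φ : ℝ → ℝ) (hφpos : ∀ t : ℝ, 0 < t → 0 < φ t)
    (hφmono : ∀ s t : ℝ, 0 < s → s ≤ t → φ t ≤ φ s)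
    (hφ0 : Tendsto φ atTop (nhds 0)) :
    ∃ u₀ : EuclideanSpace ℝ (Fin N) → ℝ,
      Integrable u₀ ∧ (∀ x, 0 ≤ u₀ x) ∧ (∫ x, u₀ x) = 1 ∧
      ∃ tseq : ℕ → ℝ, Tendsto tseq atTop atTop ∧
        ∀ n : ℕ, 1 ≤ n →
          (n : ℝ) * φ (tseq n) ≤ (tseq n) ^ ((N : ℝ) / 2) *
            ⨆ x : EuclideanSpace ℝ (Fin N),
              |heatSol N u₀ x (tseq n) - heatKernel N (tseq n) x| := by
  classical
  have hπ := pi_pos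
  -- the weights
  set a : ℕ → ℝ := fun n => (1/2 : ℝ) ^ (n + 1) with ha_def
  have ha_pos : ∀ n, 0 < a n := fun n => by positivity
  have ha_le : ∀ n, a n ≤ 1 := fun n =>
    pow_le_one₀ (by norm_num) (by norm_num)
  have ha_sum : Summable a := by
    have : Summable (fun n : ℕ => (1/2 : ℝ) ^ n) :=
      summable_geometric_of_lt_one (by norm_num) (by norm_num)
    simpa [ha_def, pow_succ] using this.mul_right (1/2 : ℝ)
  have ha_tsum : ∑' n, a n = 1 := by
    have h1 : ∑' n : ℕ, (1/2 : ℝ) ^ n = 2 := by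
      rw [tsum_geometric_of_lt_one (by norm_num) (by norm_num)]; norm_num
    calc ∑' n, a n = ∑' n : ℕ, (1/2 : ℝ) ^ n * (1/2) := by
          simp [ha_def, pow_succ]
      _ = 1 := by rw [tsum_mul_right, h1]; norm_num
  -- the volume of the unit ball
  set V : ℝ := (volume (ball (0 : EuclideanSpace ℝ (Fin N)) 1)).toReal with hVdef
  have hVfin : volume (ball (0 : EuclideanSpace ℝ (Fin N)) 1) ≠ ⊤ := measure_ball_lt_top.ne
  have hV : 0 < V :=
    ENNReal.toReal_pos (measure_ball_pos volume _ one_pos).ne' hVfin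
  have hVE : volume (ball (0 : EuclideanSpace ℝ (Fin N)) 1) = ENNReal.ofReal V :=
    (ENNReal.ofReal_toReal hVfin).symm
  -- the constant
  set c : ℝ := exp (-1) / 2 * (4 * π) ^ (-(N : ℝ) / 2) with hcdef
  have hc : 0 < c := by positivity
  -- choice of the times
  have hT : ∀ n : ℕ, ∃ T : ℝ, ((n : ℝ) + 1 ≤ T) ∧ φ T ≤ c * a n / (n + 1) := by
    intro n
    have h1 : ∀ᶠ T in atTop, φ T < c * a n / (n + 1) :=
      hφ0.eventually_lt_const (by positivity)
    obtain ⟨T, h2, h3⟩ := (h1.and (eventually_ge_atTop ((n : ℝ) + 1))).exists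
    exact ⟨T, h3, h2.le⟩
  choose tseq htseq1 htseq2 using hT
  have htseq_ge1 : ∀ n, 1 ≤ tseq n := fun n =>
    le_trans (by have := Nat.cast_nonneg (α := ℝ) n; linarith) (htseq1 n)
  have htpos : ∀ n, 0 < tseq n := fun n => lt_of_lt_of_le one_pos (htseq_ge1 n)
  -- positions of the bumps
  set b : ℕ → ℝ := fun n => a n * exp (-1) / 4 with hbdef
  have hb_pos : ∀ n, 0 < b n := fun n => by
    have := ha_pos n; positivity
  have hb_lt1 : ∀ n, b n < 1 := by
    intro n
    have h1 := ha_pos n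
    have h2 := ha_le n
    have h3 : exp (-1 : ℝ) < 1 := exp_lt_one_iff.2 (by norm_num)
    have h4 : (0:ℝ) < exp (-1) := exp_pos _
    rw [hbdef]
    nlinarith
  have hlog : ∀ n, 0 < -Real.log (b n) := fun n =>
    neg_pos.2 (Real.log_neg (hb_pos n) (hb_lt1 n))
  set r : ℕ → ℝ := fun n => Real.sqrt (4 * tseq n * (-Real.log (b n))) with hrdef
  set xc : ℕ → EuclideanSpace ℝ (Fin N) := fun n => r n • EuclideanSpace.single (⟨0, hN⟩ : Fin N) (1 : ℝ)
    with hxcdef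
  have hxnorm : ∀ n, ‖xc n‖ = r n := by
    intro n
    rw [hxcdef]
    simp only [norm_smul, EuclideanSpace.norm_single]
    rw [Real.norm_eq_abs, abs_of_nonneg (Real.sqrt_nonneg _), norm_one, mul_one]
  have hxsq : ∀ n, ‖xc n‖ ^ 2 = 4 * tseq n * (-Real.log (b n)) := by
    intro n
    rw [hxnorm n, hrdef]
    exact Real.sq_sqrt (by have := (hlog n); have := (htpos n).le; positivity)
  have hexp : ∀ n, exp (-‖xc n‖ ^ 2 / (4 * tseq n)) = b n := by
    intro n
    have ht := htpos n
    have heq2 : -‖xc n‖ ^ 2 / (4 * tseq n) = Real.log (b n) := by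
      rw [hxsq n]; field_simp
    rw [heq2, Real.exp_log (hb_pos n)]
  -- the bumps and the initial data
  set w : ℕ → EuclideanSpace ℝ (Fin N) → ℝ := fun n => (ball (xc n) 1).indicator (fun _ => a n / V) with hwdef
  have hw_meas : ∀ n, Measurable (w n) := fun n =>
    measurable_const.indicator measurableSet_ball
  have hw_nonneg : ∀ n y, 0 ≤ w n y := fun n y =>
    Set.indicator_nonneg (fun _ _ => by have := ha_pos n; positivity) y
  have hw_mem : ∀ (n : ℕ) (y : EuclideanSpace ℝ (Fin N)), y ∈ ball (xc n) 1 →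
      w n y = a n / V := fun n y hy => Set.indicator_of_mem hy _
  have hw_nmem : ∀ (n : ℕ) (y : EuclideanSpace ℝ (Fin N)), y ∉ ball (xc n) 1 →
      w n y = 0 := fun n y hy => Set.indicator_of_notMem hy _
  have hw_le : ∀ n y, w n y ≤ a n / V := by
    intro n y
    by_cases hy : y ∈ ball (xc n) 1
    · rw [hw_mem n y hy]
    · rw [hw_nmem n y hy]
      have := ha_pos n; positivity
  have hw_int : ∀ n, Integrable (w n) := by
    intro n
    rw [hwdef, integrable_indicator_iff measurableSet_ball]
    exact integrableOn_const measure_ball_lt_top.ne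
  have hw_integral : ∀ n, ∫ y, w n y = a n := by
    intro n
    rw [hwdef]
    rw [integral_indicator_const _ measurableSet_ball, Measure.addHaar_real_ball_center, measureReal_def]
    rw [smul_eq_mul, ← hVdef]
    field_simp
  have hsumw : ∀ y, Summable (fun n => w n y) := fun y =>
    Summable.of_nonneg_of_le (fun n => hw_nonneg n y) (fun n => hw_le n y)
      (ha_sum.div_const V)
  set u₀ : EuclideanSpace ℝ (Fin N) → ℝ := fun y => ∑' n, w n y with hu0def
  have hu0_nonneg : ∀ y, 0 ≤ u₀ y := fun y => tsum_nonneg (fun n => hw_nonneg n y)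
  have hu0_ge : ∀ n y, w n y ≤ u₀ y := fun n y =>
    Summable.le_tsum (hsumw y) n (fun i _ => hw_nonneg i y)
  have hu0_meas : Measurable u₀ := by
    have heq : u₀ = fun y => (∑' n, ENNReal.ofReal (w n y)).toReal := by
      funext y
      rw [hu0def, ← ENNReal.ofReal_tsum_of_nonneg (fun n => hw_nonneg n y) (hsumw y),
        ENNReal.toReal_ofReal (tsum_nonneg (fun n => hw_nonneg n y))]
    rw [heq]
    exact (Measurable.ennreal_tsum (fun n => (hw_meas n).ennreal_ofReal)).ennreal_toReal
  have hlint : ∀ n, ∫⁻ y, ENNReal.ofReal (w n y) = ENNReal.ofReal (a n) := by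
    intro n
    have heq : (fun y => ENNReal.ofReal (w n y)) =
        (ball (xc n) 1).indicator (fun _ => ENNReal.ofReal (a n / V)) := by
      funext y
      by_cases hy : y ∈ ball (xc n) 1 <;> simp [hwdef, hy]
    rw [heq, lintegral_indicator measurableSet_ball, setLIntegral_const,
      Measure.addHaar_ball_center, hVE,
      ← ENNReal.ofReal_mul (by have := ha_pos n; positivity)]
    congr 1
    field_simp
  have hu0_int : Integrable u₀ := by
    refine ⟨hu0_meas.aestronglyMeasurable, ?_⟩
    simp only [HasFiniteIntegral]
    have heq : ∀ y, (‖u₀ y‖₊ : ENNReal) = ∑' n, ENNReal.ofReal (w n y) := by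
      intro y
      rw [← enorm_eq_nnnorm, Real.enorm_eq_ofReal (hu0_nonneg y), hu0def,
        ENNReal.ofReal_tsum_of_nonneg (fun n => hw_nonneg n y) (hsumw y)]
    calc ∫⁻ y, (‖u₀ y‖₊ : ENNReal) = ∫⁻ y, ∑' n, ENNReal.ofReal (w n y) := by
          simp_rw [heq]
      _ = ∑' n, ∫⁻ y, ENNReal.ofReal (w n y) :=
          lintegral_tsum (fun n => ((hw_meas n).ennreal_ofReal).aemeasurable)
      _ = ∑' n, ENNReal.ofReal (a n) := by simp_rw [hlint]
      _ = ENNReal.ofReal (∑' n, a n) :=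
          (ENNReal.ofReal_tsum_of_nonneg (fun n => (ha_pos n).le) ha_sum).symm
      _ < ⊤ := ENNReal.ofReal_lt_top
  have hu0_integral : (∫ y, u₀ y) = 1 := by
    have hsumInt : Summable (fun i => ∫ y, ‖w i y‖) := by
      have heq : ∀ i, (∫ y, ‖w i y‖) = a i := by
        intro i
        rw [← hw_integral i]
        congr 1
        funext y
        rw [Real.norm_eq_abs, abs_of_nonneg (hw_nonneg i y)]
      exact ha_sum.congr (fun i => (heq i).symm)
    rw [hu0def, ← integral_tsum_of_summable_integral_norm hw_int hsumInt]
    rw [tsum_congr hw_integral, ha_tsum]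
  refine ⟨u₀, hu0_int, hu0_nonneg, hu0_integral, tseq, ?_, ?_⟩
  · exact tendsto_atTop_mono htseq1
      (tendsto_atTop_add_const_right _ 1 tendsto_natCast_atTop_atTop)
  · intro n hn
    have ht : 0 < tseq n := htpos n
    have ht1 : 1 ≤ tseq n := htseq_ge1 n
    set B : ℝ := (4 * π * tseq n) ^ (-(N : ℝ) / 2) with hBdef
    have hB : 0 < B := by positivity
    have hsol_nonneg : ∀ x, 0 ≤ heatSol N u₀ x (tseq n) := fun x =>
      integral_nonneg fun y => mul_nonneg (heatKernel_pos N ht _).le (hu0_nonneg y)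
    have hsol_ub : ∀ x, heatSol N u₀ x (tseq n) ≤ B := by
      intro x
      have h1 : (fun y => heatKernel N (tseq n) (x - y) * u₀ y) ≤ fun y => B * u₀ y :=
        fun y => mul_le_mul_of_nonneg_right (heatKernel_le N ht _) (hu0_nonneg y)
      have h2 := integral_mono (integrand_integrable N ht hu0_int x)
        (hu0_int.const_mul B) h1
      rw [integral_const_mul, hu0_integral, mul_one] at h2
      exact h2
    have hbdd : BddAbove
        (Set.range fun x => |heatSol N u₀ x (tseq n) - heatKernel N (tseq n) x|) := by
      refine ⟨B, ?_⟩
      rintro z ⟨x, rfl⟩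
      have hK1 := (heatKernel_pos N ht x).le
      have hK2 := heatKernel_le N ht x
      have h3 := hsol_nonneg x
      have h4 := hsol_ub x
      rw [← hBdef] at hK2
      rw [abs_le]
      constructor <;> linarith
    have key : B * exp (-1) * a n ≤ heatSol N u₀ (xc n) (tseq n) := by
      have hpt : (fun y => (B * exp (-1)) * w n y) ≤
          fun y => heatKernel N (tseq n) (xc n - y) * u₀ y := by
        intro y
        by_cases hy : y ∈ ball (xc n) 1
        · have hd : ‖xc n - y‖ ≤ 1 := by
            rw [← dist_eq_norm, dist_comm]
            exact (mem_ball.1 hy).le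
          have h1 : B * exp (-1) ≤ heatKernel N (tseq n) (xc n - y) :=
            heatKernel_lb N ht1 hd
          exact mul_le_mul h1 (hu0_ge n y) (hw_nonneg n y) (heatKernel_pos N ht _).le
        · simp only [hw_nmem n y hy, mul_zero]
          exact mul_nonneg (heatKernel_pos N ht _).le (hu0_nonneg y)
      have h2 := integral_mono ((hw_int n).const_mul _)
        (integrand_integrable N ht hu0_int _) hpt
      rw [integral_const_mul, hw_integral n] at h2
      exact h2
    have hGval : heatKernel N (tseq n) (xc n) = B * b n := by
      show B * exp (-‖xc n‖ ^ 2 / (4 * tseq n)) = B * b n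
      rw [hexp n]
    have hsu : B * (a n * exp (-1) / 2) ≤
        |heatSol N u₀ (xc n) (tseq n) - heatKernel N (tseq n) (xc n)| := by
      have hbn : b n = a n * exp (-1) / 4 := rfl
      have hA : 0 < B * (a n * exp (-1)) := by
        have := ha_pos n; positivity
      have key' : B * (a n * exp (-1)) ≤ heatSol N u₀ (xc n) (tseq n) := by
        calc B * (a n * exp (-1)) = B * exp (-1) * a n := by ring
          _ ≤ _ := key
      have h3 : B * (a n * exp (-1) / 2) ≤
          heatSol N u₀ (xc n) (tseq n) - heatKernel N (tseq n) (xc n) := by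
        rw [hGval, hbn]
        have e1 : B * (a n * exp (-1) / 2) = (1/2) * (B * (a n * exp (-1))) := by ring
        have e2 : B * (a n * exp (-1) / 4) = (1/4) * (B * (a n * exp (-1))) := by ring
        rw [e1, e2]
        linarith [key', hA]
      exact h3.trans (le_abs_self _)
    have hsup : B * (a n * exp (-1) / 2) ≤
        ⨆ x : EuclideanSpace ℝ (Fin N),
          |heatSol N u₀ x (tseq n) - heatKernel N (tseq n) x| :=
      hsu.trans (le_ciSup hbdd (xc n))
    have htB : tseq n ^ ((N : ℝ) / 2) * B = (4 * π) ^ (-(N : ℝ) / 2) := by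
      have h1 : (4 * π * tseq n : ℝ) ^ (-(N : ℝ) / 2) =
          (4 * π) ^ (-(N : ℝ) / 2) * tseq n ^ (-(N : ℝ) / 2) := by
        rw [show (4 * π * tseq n : ℝ) = (4 * π) * tseq n by ring]
        exact Real.mul_rpow (by positivity) ht.le
      rw [hBdef, h1, ← mul_assoc, mul_comm (tseq n ^ ((N : ℝ) / 2)) _, mul_assoc,
        ← Real.rpow_add ht]
      rw [show ((N : ℝ)/2 + (-(N : ℝ))/2 : ℝ) = 0 by ring, Real.rpow_zero, mul_one]
    calc (n : ℝ) * φ (tseq n) ≤ (n : ℝ) * (c * a n / (n + 1)) :=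
          mul_le_mul_of_nonneg_left (htseq2 n) (Nat.cast_nonneg n)
      _ ≤ c * a n := by
          have h5 : (0 : ℝ) < (n : ℝ) + 1 := by positivity
          have h6 : (n : ℝ) * (c * a n / (n + 1)) =
              c * a n * ((n : ℝ) / ((n : ℝ) + 1)) := by ring
          rw [h6]
          exact mul_le_of_le_one_right (by have := ha_pos n; positivity)
            ((div_le_one h5).2 (by linarith))
      _ = tseq n ^ ((N : ℝ) / 2) * (B * (a n * exp (-1) / 2)) := by
          rw [← mul_assoc, htB, hcdef]; ring
      _ ≤ tseq n ^ ((N : ℝ) / 2) * ⨆ x : EuclideanSpace ℝ (Fin N),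
            |heatSol N u₀ x (tseq n) - heatKernel N (tseq n) x| :=
          mul_le_mul_of_nonneg_left hsup (Real.rpow_nonneg ht.le _)
end
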